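/- Suppose ⋁Φ defines 𝒦 with respect to 𝓗, ⋁Ψ defines 𝓗∖𝒦 with respect to 𝓗, and 𝓗 is defined by a first-order theory T. Then there exist finite subsets Φ′ ⊆ Φ and Ψ′ ⊆ Ψ such that ⋁Φ′ defines 𝒦 with respect to 𝓗 and ⋁Ψ′ defines 𝓗∖𝒦 with respect to 𝓗. -/

import Mathlib

/-- Formulae of modal logic ML(Π,ℛ): `P` indexes unary predicate symbols,
`R` indexes binary relation symbols (modalities). -/
inductive MF (P R : Type) : Type
  | top : MF P R
  | atom : P → MF P R
  | neg : MF P R → MF P R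
  | and : MF P R → MF P R → MF P R
  | dia : R → MF P R → MF P R

/-- A (Π,ℛ)-Kripke model with domain `W`. -/
structure KModel (P R W : Type) where
  val : P → W → Prop
  rel : R → W → W → Prop

/-- Satisfaction for modal logic. -/
def msat {P R W : Type} (M : KModel P R W) : W → MF P R → Prop
  | _, .top => True
  | w, .atom p => M.val p w
  | w, .neg φ => ¬ msat M w φ
  | w, .and φ ψ => msat M w φ ∧ msat M w ψ
  | w, .dia r φ => ∃ v, M.rel r w v ∧ msat M v φ

/-- Abstract representation of (Π,ℛ,n)-types: a depth-0 type records the set of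
unary predicates holding at a point; a depth-(n+1) type records a depth-n type
together with, for each modality, the set of depth-n types realized at successors. -/
def TypeN (P R : Type) : ℕ → Type
  | 0 => Set P
  | n+1 => TypeN P R n × (R → Set (TypeN P R n))

/-- A pointed model `(M,w)` satisfies the (Π,ℛ,n)-type `τ`. -/
def satT {P R W : Type} (M : KModel P R W) : (n : ℕ) → W → TypeN P R n → Prop
  | 0, w, τ => ∀ p, M.val p w ↔ τ p
  | n+1, w, τ => satT M n w τ.1 ∧
      ∀ r σ, ((∃ v, M.rel r w v ∧ satT M n v σ) ↔ τ.2 r σ)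

/-- The (Π,ℛ,n)-type of a pointed model `(M,w)`. -/
def typeOf {P R W : Type} (M : KModel P R W) : (n : ℕ) → W → TypeN P R n
  | 0, w => fun p => M.val p w
  | n+1, w => ⟨typeOf M n w, fun r σ => ∃ v, M.rel r w v ∧ typeOf M n v = σ⟩

/-- A synchronized message passing (Π,ℛ)-automaton with states `Q` and messages `Msg`. -/
structure MPA (P R Q Msg : Type) where
  init : Set P → Q
  trans : (R → Set Msg) → Q → Q
  msgf : Q → R → Msg
  accept : Set Q
  reject : Set Q

/-- The state of automaton `A` at node `w` of model `M` in round `n`. -/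
def MPA.run {P R W Q Msg : Type} (A : MPA P R Q Msg) (M : KModel P R W) : ℕ → W → Q
  | 0, w => A.init {p | M.val p w}
  | n+1, w =>
      A.trans (fun r => {m | ∃ v, M.rel r w v ∧ m = A.msgf (A.run M n v) r}) (A.run M n w)

/-- `A` accepts `(M,w)` in round `n`. -/
def MPA.acceptsAt {P R W Q Msg : Type} (A : MPA P R Q Msg) (M : KModel P R W)
    (w : W) (n : ℕ) : Prop :=
  A.run M n w ∈ A.accept ∧ ∀ m < n, A.run M m w ∉ A.reject

/-- `A` rejects `(M,w)` in round `n`. -/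
def MPA.rejectsAt {P R W Q Msg : Type} (A : MPA P R Q Msg) (M : KModel P R W)
    (w : W) (n : ℕ) : Prop :=
  A.run M n w ∈ A.reject ∧ ∀ m < n, A.run M m w ∉ A.accept

/-- `A` accepts the pointed model `(M,w)`. -/
def MPA.accepts {P R W Q Msg : Type} (A : MPA P R Q Msg) (M : KModel P R W) (w : W) : Prop :=
  ∃ n, A.acceptsAt M w n

/-- `A` rejects the pointed model `(M,w)`. -/
def MPA.rejects {P R W Q Msg : Type} (A : MPA P R Q Msg) (M : KModel P R W) (w : W) : Prop :=
  ∃ n, A.rejectsAt M w n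

/-- Formulae of first-order logic FO(Π,ℛ) with variables indexed by ℕ. -/
inductive FO (P R : Type) : Type
  | top : FO P R
  | eq : ℕ → ℕ → FO P R
  | atom : P → ℕ → FO P R
  | rel : R → ℕ → ℕ → FO P R
  | neg : FO P R → FO P R
  | and : FO P R → FO P R → FO P R
  | ex : ℕ → FO P R → FO P R

/-- First-order satisfaction under an assignment `f`. -/
def fsat {P R W : Type} (M : KModel P R W) : (ℕ → W) → FO P R → Prop
  | _, .top => True
  | f, .eq x y => f x = f y
  | f, .atom p x => M.val p (f x)
  | f, .rel r x y => M.rel r (f x) (f y)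
  | f, .neg φ => ¬ fsat M f φ
  | f, .and φ ψ => fsat M f φ ∧ fsat M f ψ
  | f, .ex x φ => ∃ v, fsat M (Function.update f x v) φ

section UltraAux

variable {P R I : Type} (W : I → Type) (Mi : ∀ i, KModel P R (W i)) (U : Ultrafilter I)

private lemma mem_congr_aux {A B E : Set I} (hE : E ∈ U)
    (h : ∀ i ∈ E, (i ∈ A ↔ i ∈ B)) : A ∈ U ↔ B ∈ U := by
  constructor
  · intro hA
    exact Filter.mem_of_superset (Filter.inter_mem hA hE) (fun i hi => (h i hi.2).1 hi.1)
  · intro hB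
    exact Filter.mem_of_superset (Filter.inter_mem hB hE) (fun i hi => (h i hi.2).2 hi.1)

def uSetoid : Setoid (∀ i, W i) where
  r f g := {i | f i = g i} ∈ U
  iseqv := by
    refine ⟨fun f => ?_, fun {f g} h => ?_, fun {f g k} h1 h2 => ?_⟩
    · exact Filter.mem_of_superset Filter.univ_mem (fun i _ => rfl)
    · exact Filter.mem_of_superset h (fun i hi => hi.symm)
    · exact Filter.mem_of_superset (Filter.inter_mem h1 h2)
        (fun i hi => hi.1.trans hi.2)

def UProd : Type := Quotient (uSetoid W U)

def uModel : KModel P R (UProd W U) where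
  val p := Quotient.lift (fun f => {i | (Mi i).val p (f i)} ∈ U) (by
    intro f g hfg
    exact propext (mem_congr_aux U hfg (fun i hi => by simp only [Set.mem_setOf_eq] at hi ⊢; rw [hi])))
  rel r := Quotient.lift₂ (fun f g => {i | (Mi i).rel r (f i) (g i)} ∈ U) (by
    intro f g f' g' hf hg
    exact propext (mem_congr_aux U (Filter.inter_mem hf hg) (fun i hi => by
      obtain ⟨h1, h2⟩ := hi
      simp only [Set.mem_setOf_eq] at h1 h2 ⊢
      rw [h1, h2])))

theorem los [hne : ∀ i, Nonempty (W i)] (φ : FO P R) :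
    ∀ g : ℕ → ∀ i, W i,
      fsat (uModel W Mi U) (fun n => Quotient.mk (uSetoid W U) (g n)) φ ↔
        {i | fsat (Mi i) (fun n => g n i) φ} ∈ U := by
  induction φ with
  | top =>
      intro g
      simp only [fsat, Set.setOf_true]
      exact iff_of_true trivial Filter.univ_mem
  | eq x y =>
      intro g
      simp only [fsat]
      exact Quotient.eq (r := uSetoid W U)
  | atom p x => intro g; exact Iff.rfl
  | rel r x y => intro g; exact Iff.rfl
  | neg φ ih =>
      intro g
      simp only [fsat, ih g, ← Ultrafilter.compl_mem_iff_notMem]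
      rfl
  | and φ ψ ihφ ihψ =>
      intro g
      simp only [fsat, ihφ g, ihψ g]
      exact Filter.inter_mem_iff.symm
  | ex x φ ih =>
      intro g
      simp only [fsat]
      constructor
      · rintro ⟨v, hv⟩
        have hupd : Function.update (β := fun _ => UProd W U) (fun n => Quotient.mk (uSetoid W U) (g n)) x v
            = fun n => Quotient.mk (uSetoid W U) (Function.update g x v.out n) := by
          funext n
          by_cases h : n = x
          · subst h; exact (Function.update_self _ _ _).trans ((Quotient.out_eq v).symm.trans (congrArg (Quotient.mk (uSetoid W U)) (Function.update_self n v.out g).symm))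
          · exact (Function.update_of_ne h _ _).trans (congrArg (Quotient.mk (uSetoid W U)) (Function.update_of_ne h _ _).symm)
        rw [hupd] at hv
        have := (ih _).1 hv
        refine Filter.mem_of_superset this (fun i hi => ?_)
        refine ⟨v.out i, ?_⟩
        have : (fun n => Function.update g x v.out n i)
            = Function.update (fun n => g n i) x (v.out i) := by
          funext n
          by_cases h : n = x
          · subst h; simp
          · simp [Function.update_of_ne h]
        rw [← this]
        exact hi
      · intro hS
        classical
        set S := {i | ∃ v, fsat (Mi i) (Function.update (fun n => g n i) x v) φ} with hSdef
        have hwit : ∀ i, ∃ v : W i, i ∈ S →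
            fsat (Mi i) (Function.update (fun n => g n i) x v) φ := by
          intro i
          by_cases hi : i ∈ S
          · obtain ⟨v, hv⟩ := hi
            exact ⟨v, fun _ => hv⟩
          · exact ⟨Classical.arbitrary _, fun h => absurd h hi⟩
        choose h hh using hwit
        refine ⟨Quotient.mk (uSetoid W U) h, ?_⟩
        have hupd : Function.update (β := fun _ => UProd W U) (fun n => Quotient.mk (uSetoid W U) (g n)) x
              (Quotient.mk (uSetoid W U) h)
            = fun n => Quotient.mk (uSetoid W U) (Function.update g x h n) := by
          funext n
          by_cases hnx : n = x
          · subst hnx; exact (Function.update_self _ _ _).trans (congrArg (Quotient.mk (uSetoid W U)) (Function.update_self n h g).symm)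
          · exact (Function.update_of_ne hnx _ _).trans (congrArg (Quotient.mk (uSetoid W U)) (Function.update_of_ne hnx _ _).symm)
        rw [hupd, ih]
        refine Filter.mem_of_superset hS (fun i hi => ?_)
        have heq : (fun n => Function.update g x h n i)
            = Function.update (fun n => g n i) x (h i) := by
          funext n
          by_cases hnx : n = x
          · subst hnx; simp
          · simp [Function.update_of_ne hnx]
        simp only [Set.mem_setOf_eq]
        rw [heq]
        exact hh i hi

end UltraAux

/-- Standard translation of modal formulae into first-order logic. -/
def st {P R : Type} (x : ℕ) : MF P R → FO P R
  | .top => .top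
  | .atom p => .atom p x
  | .neg φ => .neg (st x φ)
  | .and φ ψ => .and (st x φ) (st x ψ)
  | .dia r φ => .ex (x+1) (.and (.rel r x (x+1)) (st (x+1) φ))

theorem st_correct {P R W : Type} (M : KModel P R W) (φ : MF P R) :
    ∀ (x : ℕ) (f : ℕ → W), fsat M f (st x φ) ↔ msat M (f x) φ := by
  induction φ with
  | top => intro x f; simp [st, fsat, msat]
  | atom p => intro x f; simp [st, fsat, msat]
  | neg φ ih => intro x f; simp [st, fsat, msat, ih]
  | and φ ψ ihφ ihψ => intro x f; simp [st, fsat, msat, ihφ, ihψ]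
  | dia r φ ih =>
      intro x f
      simp only [st, fsat, msat]
      constructor
      · rintro ⟨v, h1, h2⟩
        refine ⟨v, ?_, ?_⟩
        · rwa [Function.update_of_ne (Nat.ne_of_lt (Nat.lt_succ_self x)) , Function.update_self] at h1
        · rw [ih (x+1)] at h2
          rwa [Function.update_self] at h2
      · rintro ⟨v, h1, h2⟩
        refine ⟨v, ?_, ?_⟩
        · rwa [Function.update_of_ne (Nat.ne_of_lt (Nat.lt_succ_self x)), Function.update_self]
        · rw [ih (x+1), Function.update_self]
          exact h2

theorem key_cover {P R : Type}
    (H K : ∀ W : Type, KModel P R W → W → Prop)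
    (Φ Ψ : Set (MF P R)) (T : Set (FO P R))
    (hΦ : ∀ (W : Type) (M : KModel P R W) (w : W),
        H W M w → (K W M w ↔ ∃ φ ∈ Φ, msat M w φ))
    (hΨ : ∀ (W : Type) (M : KModel P R W) (w : W),
        H W M w → (¬ K W M w ↔ ∃ ψ ∈ Ψ, msat M w ψ))
    (hT : ∀ (W : Type) (M : KModel P R W) (w : W),
        H W M w ↔ ∀ φ ∈ T, ∀ f : ℕ → W, fsat M f φ) :
    ∃ F : Finset (MF P R), ↑F ⊆ Φ ∪ Ψ ∧
      ∀ (W : Type) (M : KModel P R W) (w : W), H W M w → ∃ χ ∈ F, msat M w χ := by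
  by_contra hcon
  push_neg at hcon
  classical
  -- For each finite F ⊆ Φ ∪ Ψ choose a counter-model
  set I := {F : Finset (MF P R) // ↑F ⊆ Φ ∪ Ψ} with hI
  have hctr : ∀ i : I, ∃ (W : Type) (M : KModel P R W) (w : W),
      H W M w ∧ ∀ χ ∈ i.1, ¬ msat M w χ := by
    intro i
    obtain ⟨W, M, w, hH, hno⟩ := hcon i.1 i.2
    exact ⟨W, M, w, hH, fun χ hχ => hno χ hχ⟩
  choose W Mi wi hH hno using hctr
  -- an ultrafilter containing, for each χ ∈ Φ ∪ Ψ, the set of F containing χ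
  have hfip : ∀ Tf : Finset (Set I),
      (↑Tf : Set (Set I)) ⊆ {A | ∃ χ ∈ Φ ∪ Ψ, A = {i : I | χ ∈ i.1}} →
      (⋂₀ (↑Tf : Set (Set I))).Nonempty := by
    intro Tf hTf
    have : ∀ A ∈ Tf, ∃ χ ∈ Φ ∪ Ψ, A = {i : I | χ ∈ i.1} := fun A hA => hTf hA
    choose χf hχf hAf using this
    refine ⟨⟨Tf.attach.image (fun A => χf A.1 A.2), ?_⟩, ?_⟩
    · intro χ hχ
      simp only [Finset.coe_image, Set.mem_image, Finset.mem_coe, Finset.mem_attach] at hχ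
      obtain ⟨A, -, rfl⟩ := hχ
      exact hχf A.1 A.2
    · intro A hA
      simp only [Finset.mem_coe] at hA
      rw [hAf A hA]
      simp only [Set.mem_setOf_eq]
      exact Finset.mem_image.2 ⟨⟨A, hA⟩, Finset.mem_attach _ _, rfl⟩
  obtain ⟨U, hU⟩ := Ultrafilter.exists_ultrafilter_of_finite_inter_nonempty _ hfip
  have hne : ∀ i : I, Nonempty (W i) := fun i => ⟨wi i⟩
  -- the ultraproduct pointed model
  set Minf := uModel W Mi U with hMinf
  set winf : UProd W U := Quotient.mk (uSetoid W U) wi with hwinf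
  have hHinf : H (UProd W U) Minf winf := by
    rw [hT]
    intro φ hφ f
    have : (fun n => Quotient.mk (uSetoid W U) (fun i => (f n).out i)) = f := by
      funext n
      exact Quotient.out_eq _
    rw [← this, los W Mi U φ]
    have : {i : I | fsat (Mi i) (fun n => (f n).out i) φ} = Set.univ := by
      ext i
      simp only [Set.mem_setOf_eq, Set.mem_univ, iff_true]
      exact ((hT _ (Mi i) (wi i)).1 (hH i)) φ hφ _
    rw [this]
    exact Filter.univ_mem
  have hnosat : ∀ χ ∈ Φ ∪ Ψ, ¬ msat Minf winf χ := by
    intro χ hχ hsat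
    have h1 : {i : I | msat (Mi i) (wi i) χ} ∈ U := by
      have := (st_correct Minf χ 0 (fun _ => winf)).2 hsat
      rw [show (fun _ : ℕ => winf) = fun n => Quotient.mk (uSetoid W U) ((fun _ => wi) n) from rfl,
        los W Mi U] at this
      refine Filter.mem_of_superset this (fun i hi => ?_)
      exact (st_correct (Mi i) χ 0 (fun _ => wi i)).1 hi
    have h2 : {i : I | χ ∈ i.1} ∈ U := hU (⟨χ, hχ, rfl⟩ : _ ∈ {A | ∃ χ ∈ Φ ∪ Ψ, A = {i : I | χ ∈ i.1}})
    have h3 : ({i : I | msat (Mi i) (wi i) χ} ∩ {i : I | χ ∈ i.1}) ∈ U :=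
      Filter.inter_mem h1 h2
    have hempty : ({i : I | msat (Mi i) (wi i) χ} ∩ {i : I | χ ∈ i.1}) = ∅ := by
      ext i
      simp only [Set.mem_inter_iff, Set.mem_setOf_eq, Set.mem_empty_iff_false, iff_false, not_and]
      intro hm hc
      exact hno i χ hc hm
    rw [hempty] at h3
    exact Filter.empty_notMem U.toFilter h3
  by_cases hK : K (UProd W U) Minf winf
  · obtain ⟨φ, hφ, hsat⟩ := (hΦ _ Minf winf hHinf).1 hK
    exact hnosat φ (Or.inl hφ) hsat
  · obtain ⟨ψ, hψ, hsat⟩ := (hΨ _ Minf winf hHinf).1 hK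
    exact hnosat ψ (Or.inr hψ) hsat

/-- if ⋁Φ defines 𝒦 w.r.t. 𝓗, ⋁Ψ defines 𝓗∖𝒦 w.r.t. 𝓗, and 𝓗 is
defined by a first-order theory T, then finite subsets Φ' ⊆ Φ and Ψ' ⊆ Ψ already
define 𝒦 and 𝓗∖𝒦 w.r.t. 𝓗. -/
theorem stmt_10 (P R : Type)
    (H K : ∀ W : Type, KModel P R W → W → Prop)
    (hsub : ∀ (W : Type) (M : KModel P R W) (w : W), K W M w → H W M w)
    (Φ Ψ : Set (MF P R)) (T : Set (FO P R))
    (hΦ : ∀ (W : Type) (M : KModel P R W) (w : W),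
        H W M w → (K W M w ↔ ∃ φ ∈ Φ, msat M w φ))
    (hΨ : ∀ (W : Type) (M : KModel P R W) (w : W),
        H W M w → (¬ K W M w ↔ ∃ ψ ∈ Ψ, msat M w ψ))
    (hT : ∀ (W : Type) (M : KModel P R W) (w : W),
        H W M w ↔ ∀ φ ∈ T, ∀ f : ℕ → W, fsat M f φ) :
    ∃ Φ' ⊆ Φ, ∃ Ψ' ⊆ Ψ, Φ'.Finite ∧ Ψ'.Finite ∧
      (∀ (W : Type) (M : KModel P R W) (w : W),
        H W M w → (K W M w ↔ ∃ φ ∈ Φ', msat M w φ)) ∧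
      (∀ (W : Type) (M : KModel P R W) (w : W),
        H W M w → (¬ K W M w ↔ ∃ ψ ∈ Ψ', msat M w ψ)) := by
  obtain ⟨F, hFsub, hFcov⟩ := key_cover H K Φ Ψ T hΦ hΨ hT
  refine ⟨↑F ∩ Φ, Set.inter_subset_right, ↑F ∩ Ψ, Set.inter_subset_right,
    (F.finite_toSet.inter_of_left _), (F.finite_toSet.inter_of_left _), ?_, ?_⟩
  · intro W M w hH
    constructor
    · intro hK
      obtain ⟨χ, hχF, hsat⟩ := hFcov W M w hH
      have hχΦ : χ ∈ Φ := by
        rcases hFsub hχF with h | h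
        · exact h
        · exact absurd hK (((hΨ W M w hH).2 ⟨χ, h, hsat⟩))
      exact ⟨χ, ⟨hχF, hχΦ⟩, hsat⟩
    · rintro ⟨φ, ⟨-, hφΦ⟩, hsat⟩
      exact (hΦ W M w hH).2 ⟨φ, hφΦ, hsat⟩
  · intro W M w hH
    constructor
    · intro hK
      obtain ⟨χ, hχF, hsat⟩ := hFcov W M w hH
      have hχΨ : χ ∈ Ψ := by
        rcases hFsub hχF with h | h
        · exact absurd ((hΦ W M w hH).2 ⟨χ, h, hsat⟩) hK
        · exact h
      exact ⟨χ, ⟨hχF, hχΨ⟩, hsat⟩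
    · rintro ⟨ψ, ⟨-, hψΨ⟩, hsat⟩
      exact (hΨ W M w hH).2 ⟨ψ, hψΨ, hsat⟩
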